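/- Let V be a finite-dimensional real vector space, C ⊆ V a closed convex cone, and T : V → V a linear map with T(C) ⊆ C. Suppose C spans V and contains no line. Then the spectral radius ρ of T is an eigenvalue of T admitting an eigenvector in C. -/

import Mathlib

set_option linter.unusedSectionVars false
set_option maxHeartbeats 1000000

open Set Filter Topology
open scoped NNReal ENNReal

/-- On a salient closed convex cone in a finite-dimensional space there is a
continuous linear functional bounded below by a multiple of the norm. -/
lemma exists_pos_functional
    (E : Type*) [NormedAddCommGroup E] [NormedSpace ℝ E]
    [FiniteDimensional ℝ E]
    (C : Set E) (hclosed : IsClosed C) (hconv : Convex ℝ C)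
    (hcone : ∀ r : ℝ, 0 ≤ r → ∀ x ∈ C, r • x ∈ C)
    (h0 : (0:E) ∈ C)
    (hsalient : C ∩ (-C) ⊆ {0}) :
    ∃ (φ : E →L[ℝ] ℝ) (c : ℝ), 0 < c ∧ ∀ x ∈ C, c * ‖x‖ ≤ φ x := by
  -- For each x in C ∩ sphere, get a functional nonneg on C and positive at x.
  have key : ∀ x : E, x ∈ C ∩ Metric.sphere 0 1 →
      ∃ g : E →L[ℝ] ℝ, (∀ a ∈ C, 0 ≤ g a) ∧ 0 < g x := by
    rintro x ⟨hxC, hxS⟩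
    have hx0 : x ≠ 0 := by
      intro h; rw [h] at hxS; simp at hxS
    have hnx : -x ∉ C := by
      intro h
      exact hx0 (hsalient ⟨hxC, by simpa using h⟩)
    obtain ⟨f, s, hfs, hsf⟩ := geometric_hahn_banach_closed_point hconv hclosed hnx
    have hs0 : 0 < s := by simpa using hfs 0 h0
    have hfnonpos : ∀ a ∈ C, f a ≤ 0 := by
      intro a ha
      by_contra h
      push_neg at h
      have ht : (0:ℝ) ≤ (s + 1) / f a := by positivity
      have := hfs _ (hcone _ ht a ha)
      rw [map_smul] at this
      simp only [smul_eq_mul] at this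
      rw [div_mul_cancel₀ _ (ne_of_gt h)] at this
      linarith
    refine ⟨-f, fun a ha => by simpa using hfnonpos a ha, ?_⟩
    have : f (-x) > s := hsf
    have : -f x > s := by rwa [map_neg] at this
    simp only [ContinuousLinearMap.neg_apply]
    linarith
  set S : Set E := C ∩ Metric.sphere 0 1 with hS
  have hScomp : IsCompact S := (isCompact_sphere (0:E) 1).inter_left hclosed
  rcases eq_empty_or_nonempty S with hSe | hSne
  · refine ⟨0, 1, one_pos, fun x hx => ?_⟩
    have hx0 : x = 0 := by
      by_contra h
      have : ‖x‖⁻¹ • x ∈ S := by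
        refine ⟨hcone _ (by positivity) x hx, ?_⟩
        simp [norm_smul, abs_of_nonneg (by positivity : (0:ℝ) ≤ ‖x‖⁻¹),
          inv_mul_cancel₀ (norm_ne_zero_iff.mpr h)]
      rw [hSe] at this; exact this
    simp [hx0]
  · choose g hg1 hg2 using key
    -- finite subcover
    have hcover : S ⊆ ⋃ x : S, {y : E | 0 < g x.1 x.2 y} :=
      fun y hy => mem_iUnion.2 ⟨⟨y, hy⟩, hg2 y hy⟩
    obtain ⟨t, ht⟩ := hScomp.elim_finite_subcover (fun x : S => {y : E | 0 < g x.1 x.2 y})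
      (fun x => isOpen_lt continuous_const (g x.1 x.2).continuous) hcover
    set φ : E →L[ℝ] ℝ := ∑ x ∈ t, g x.1 x.2 with hφ
    have hφnonneg : ∀ a ∈ C, 0 ≤ φ a := by
      intro a ha
      rw [hφ]
      simp only [ContinuousLinearMap.coe_sum', Finset.sum_apply]
      exact Finset.sum_nonneg fun x _ => hg1 x.1 x.2 a ha
    have hφpos : ∀ y ∈ S, 0 < φ y := by
      intro y hy
      obtain ⟨x, hxt, hxy⟩ := mem_iUnion₂.1 (ht hy)
      rw [hφ]
      simp only [ContinuousLinearMap.coe_sum', Finset.sum_apply]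
      exact Finset.sum_pos' (fun z _ => hg1 z.1 z.2 y hy.1) ⟨x, hxt, hxy⟩
    obtain ⟨x₀, hx₀S, hx₀min⟩ := hScomp.exists_isMinOn hSne φ.continuous.continuousOn
    refine ⟨φ, φ x₀, hφpos x₀ hx₀S, fun x hx => ?_⟩
    rcases eq_or_ne x 0 with rfl | hx0
    · simp
    · have hxS : ‖x‖⁻¹ • x ∈ S := by
        refine ⟨hcone _ (by positivity) x hx, ?_⟩
        simp [norm_smul, abs_of_nonneg (by positivity : (0:ℝ) ≤ ‖x‖⁻¹),
          inv_mul_cancel₀ (norm_ne_zero_iff.mpr hx0)]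
      have : φ x₀ ≤ φ (‖x‖⁻¹ • x) := hx₀min hxS
      simp only [map_smul, smul_eq_mul] at this
      have hnx : 0 < ‖x‖ := norm_pos_iff.mpr hx0
      calc φ x₀ * ‖x‖ ≤ (‖x‖⁻¹ * φ x) * ‖x‖ := by
            apply mul_le_mul_of_nonneg_right _ hnx.le
            exact this
          _ = φ x := by field_simp

lemma exists_interior_point
    (E : Type*) [NormedAddCommGroup E] [NormedSpace ℝ E]
    [FiniteDimensional ℝ E] [Nontrivial E]
    (C : Set E) (hconv : Convex ℝ C)
    (h0 : (0:E) ∈ C)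
    (hspan : Submodule.span ℝ C = ⊤)
    (hsalient : C ∩ (-C) ⊆ {0}) :
    ∃ (u : E) (ε : ℝ), 0 < ε ∧ u ≠ 0 ∧ Metric.closedBall u ε ⊆ C := by
  have haff : affineSpan ℝ C = ⊤ := by
    have h1 : (affineSpan ℝ (insert (0:E) C) : Set E) = Submodule.span ℝ C :=
      affineSpan_insert_zero C
    rw [Set.insert_eq_of_mem h0, hspan] at h1
    exact by
      apply AffineSubspace.ext; intro x
      simp only [AffineSubspace.mem_top, iff_true]
      have hx : x ∈ (affineSpan ℝ C : Set E) := by rw [h1]; simp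
      exact hx
  have hint : (interior C).Nonempty :=
    (hconv.interior_nonempty_iff_affineSpan_eq_top).2 haff
  obtain ⟨u, hu⟩ := hint
  obtain ⟨ε, hε, hball⟩ := Metric.isOpen_iff.1 isOpen_interior u hu
  refine ⟨u, ε/2, by positivity, ?_, ?_⟩
  · rintro rfl
    obtain ⟨w, hw⟩ := exists_ne (0:E)
    have hwc : ∀ (s : ℝ), |s| ≤ ε/2 → s • (‖w‖⁻¹ • w) ∈ C := by
      intro s hs
      apply interior_subset
      apply hball
      simp only [Metric.mem_ball, dist_zero_right]
      rw [norm_smul, norm_smul]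
      simp only [Real.norm_eq_abs, norm_norm]
      rw [abs_of_nonneg (by positivity : (0:ℝ) ≤ ‖w‖⁻¹), inv_mul_cancel₀ (norm_ne_zero_iff.2 hw),
        mul_one]
      linarith [abs_nonneg s]
    have h1 : (ε/2) • (‖w‖⁻¹ • w) ∈ C := hwc (ε/2) (by rw [abs_of_pos (by positivity)]
    )
    have h2 : -((ε/2) • (‖w‖⁻¹ • w)) ∈ C := by
      have := hwc (-(ε/2)) (by rw [abs_neg, abs_of_pos (by positivity)])
      rwa [neg_smul] at this
    have : (ε/2) • (‖w‖⁻¹ • w) = 0 := hsalient ⟨h1, by simpa using h2⟩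
    have : ‖w‖⁻¹ • w = 0 := by
      have hε2 : (ε/2) ≠ 0 := ne_of_gt (by positivity)
      exact (smul_eq_zero.1 this).resolve_left hε2
    have : w = 0 := by
      have hn : ‖w‖⁻¹ ≠ 0 := inv_ne_zero (norm_ne_zero_iff.2 hw)
      exact (smul_eq_zero.1 this).resolve_left hn
    exact hw this
  · intro y hy
    apply interior_subset
    apply hball
    simp only [Metric.mem_closedBall] at hy
    simp only [Metric.mem_ball]
    linarith


section PFaux

variable {E : Type*} [NormedAddCommGroup E] [NormedSpace ℝ E]
    [FiniteDimensional ℝ E] [Nontrivial E]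

noncomputable def gelfandR (T : E →L[ℝ] E) : ℝ :=
  ⨅ n : ℕ, ‖T^(n+1)‖ ^ ((1:ℝ)/(n+1))

lemma gelfandR_bdd (T : E →L[ℝ] E) :
    BddBelow (Set.range fun n : ℕ => ‖T^(n+1)‖ ^ ((1:ℝ)/(n+1))) := by
  refine ⟨0, ?_⟩
  rintro x ⟨n, rfl⟩
  positivity

lemma gelfandR_nonneg (T : E →L[ℝ] E) : 0 ≤ gelfandR T := by
  apply le_ciInf
  intro n
  positivity

lemma gelfandR_pow_le (T : E →L[ℝ] E) (n : ℕ) : (gelfandR T)^n ≤ ‖T^n‖ := by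
  cases n with
  | zero => simp
  | succ m =>
    have h1 : gelfandR T ≤ ‖T^(m+1)‖ ^ ((1:ℝ)/(m+1)) := ciInf_le (gelfandR_bdd T) m
    have h2 : (gelfandR T)^(m+1) ≤ (‖T^(m+1)‖ ^ ((1:ℝ)/(m+1)))^(m+1) :=
      pow_le_pow_left₀ (gelfandR_nonneg T) h1 _
    calc (gelfandR T)^(m+1) ≤ (‖T^(m+1)‖ ^ ((1:ℝ)/(m+1)))^(m+1) := h2
      _ = ‖T^(m+1)‖ := by
          rw [one_div, ← Nat.cast_add_one, Real.rpow_inv_natCast_pow (norm_nonneg _)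
            (Nat.succ_ne_zero m)]

lemma gelfandR_growth (T : E →L[ℝ] E) (l : ℝ) (hl : gelfandR T < l) :
    ∃ B, 0 < B ∧ ∃ μ, 0 < μ ∧ μ < l ∧ ∀ n, ‖T^n‖ ≤ B * μ^n := by
  set μ : ℝ := (gelfandR T + l)/2 with hμ
  have hr0 := gelfandR_nonneg T
  have hμ0 : 0 < μ := by rw [hμ]; linarith
  have hμl : μ < l := by rw [hμ]; linarith
  have hrμ : gelfandR T < μ := by rw [hμ]; linarith
  obtain ⟨m, hm⟩ := exists_lt_of_ciInf_lt hrμ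
  have hTm : ‖T^(m+1)‖ < μ^(m+1) := by
    have := pow_lt_pow_left₀ hm (by positivity : (0:ℝ) ≤ ‖T^(m+1)‖ ^ ((1:ℝ)/(m+1))) (Nat.succ_ne_zero m)
    rwa [one_div, ← Nat.cast_add_one, Real.rpow_inv_natCast_pow (norm_nonneg _)
      (Nat.succ_ne_zero m)] at this
  -- B := max over s ≤ m of ‖T^s‖ / μ^s
  obtain ⟨B, hB⟩ : ∃ B, ∀ s ∈ Finset.range (m+1), ‖T^s‖ / μ^s ≤ B :=
    ⟨(Finset.range (m+1)).sup' ⟨0, by simp⟩ (fun s => ‖T^s‖ / μ^s),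
      fun s hs => Finset.le_sup' (fun s => ‖T^s‖ / μ^s) hs⟩
  have hB1 : (1:ℝ) ≤ B := by
    have := hB 0 (by simp)
    simpa using this
  refine ⟨B, by linarith, μ, hμ0, hμl, ?_⟩
  intro n
  induction n using Nat.strong_induction_on with
  | _ n ih =>
    by_cases hn : n < m + 1
    · have := hB n (Finset.mem_range.2 hn)
      calc ‖T^n‖ = (‖T^n‖ / μ^n) * μ^n := by field_simp
        _ ≤ B * μ^n := by
            apply mul_le_mul_of_nonneg_right this (by positivity)
    · push_neg at hn
      obtain ⟨k, rfl⟩ : ∃ k, n = (m+1) + k := ⟨n - (m+1), by omega⟩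
      have hkn : k < m + 1 + k := by omega
      calc ‖T^((m+1)+k)‖ = ‖T^(m+1) * T^k‖ := by rw [← pow_add]
        _ ≤ ‖T^(m+1)‖ * ‖T^k‖ := norm_mul_le _ _
        _ ≤ μ^(m+1) * (B * μ^k) := by
            apply mul_le_mul hTm.le (ih k hkn) (norm_nonneg _) (by positivity)
        _ = B * μ^((m+1)+k) := by ring

lemma spectralRadius_ne_top (T : E →L[ℝ] E) : spectralRadius ℝ T ≠ ⊤ :=
  ne_top_of_le_ne_top ENNReal.coe_ne_top (spectrum.spectralRadius_le_nnnorm (𝕜 := ℝ) T)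

lemma toReal_spectralRadius_le_gelfandR (T : E →L[ℝ] E) :
    (spectralRadius ℝ T).toReal ≤ gelfandR T := by
  apply le_ciInf
  intro n
  have h := spectrum.spectralRadius_le_pow_nnnorm_pow_one_div ℝ T n
  rw [nnnorm_one, ENNReal.coe_one, ENNReal.one_rpow, mul_one] at h
  have h2 := ENNReal.toReal_mono (by
    apply ENNReal.rpow_ne_top_of_nonneg (by positivity)
    exact ENNReal.coe_ne_top) h
  rwa [← ENNReal.toReal_rpow, ENNReal.coe_toReal, coe_nnnorm] at h2

lemma mem_spectrum_of_eigen (T : E →L[ℝ] E) (r : ℝ) (v : E) (hv : v ≠ 0)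
    (heq : T v = r • v) : r ∈ spectrum ℝ T := by
  rw [spectrum.mem_iff]
  intro hunit
  apply hv
  have hker : (algebraMap ℝ (E →L[ℝ] E) r - T) v = 0 := by
    simp [Algebra.algebraMap_eq_smul_one, ContinuousLinearMap.sub_apply,
      ContinuousLinearMap.smul_apply, ContinuousLinearMap.one_apply, heq, sub_self]
  set u := hunit.unit
  have hu : (u : E →L[ℝ] E) = algebraMap ℝ (E →L[ℝ] E) r - T := hunit.unit_spec
  calc v = ((↑u⁻¹ * ↑u : E →L[ℝ] E)) v := by rw [u.inv_mul]; simp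
    _ = (↑u⁻¹ : E →L[ℝ] E) ((↑u : E →L[ℝ] E) v) := rfl
    _ = 0 := by rw [hu, hker, map_zero]

lemma le_toReal_spectralRadius (T : E →L[ℝ] E) (r : ℝ) (hr : 0 ≤ r)
    (hmem : r ∈ spectrum ℝ T) : r ≤ (spectralRadius ℝ T).toReal := by
  have h : (‖r‖₊ : ℝ≥0∞) ≤ spectralRadius ℝ T := by
    rw [spectralRadius]
    exact le_iSup₂ (f := fun k (_ : k ∈ spectrum ℝ T) => (‖k‖₊ : ℝ≥0∞)) r hmem
  have h2 := ENNReal.toReal_mono (spectralRadius_ne_top T) h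
  rwa [ENNReal.coe_toReal, coe_nnnorm, Real.norm_eq_abs, abs_of_nonneg hr] at h2

lemma resolvent_series (T : E →L[ℝ] E) (C : Set E)
    (hclosed : IsClosed C) (hconv : Convex ℝ C)
    (hcone : ∀ r : ℝ, 0 ≤ r → ∀ x ∈ C, r • x ∈ C)
    (h0C : (0:E) ∈ C) (hT : ∀ x ∈ C, T x ∈ C)
    (u : E) (huC : u ∈ C) (l : ℝ) (hl : gelfandR T < l) :
    ∃ S ∈ C, l • S - T S = u ∧
      ∀ (φ : E →L[ℝ] ℝ) (c0 : ℝ), 0 ≤ c0 → (∀ n : ℕ, c0 * ‖T^n‖ ≤ φ ((T^n) u)) →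
        c0 * (l - gelfandR T)⁻¹ ≤ φ S := by
  have hr0 : 0 ≤ gelfandR T := gelfandR_nonneg T
  have hl0 : 0 < l := lt_of_le_of_lt hr0 hl
  obtain ⟨B, hB, μ, hμ0, hμl, hgrow⟩ := gelfandR_growth T l hl
  -- closure of C under addition and finite sums
  have hadd : ∀ x ∈ C, ∀ y ∈ C, x + y ∈ C := by
    intro x hx y hy
    have h2 : ((1:ℝ)/2) • x + ((1:ℝ)/2) • y ∈ C :=
      hconv hx hy (by norm_num) (by norm_num) (by norm_num)
    have := hcone 2 (by norm_num) _ h2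
    rwa [smul_add, smul_smul, smul_smul, show (2:ℝ) * (1/2) = 1 by norm_num, one_smul,
      one_smul] at this
  -- iterates stay in C
  have hTn : ∀ n : ℕ, ∀ x ∈ C, (T^n) x ∈ C := by
    intro n
    induction n with
    | zero => intro x hx; simpa using hx
    | succ m ih =>
      intro x hx
      rw [pow_succ', ContinuousLinearMap.mul_apply]
      exact hT _ (ih x hx)
  set g : ℕ → E := fun n => (l⁻¹)^(n+1) • ((T^n) u) with hg
  have hgC : ∀ n, g n ∈ C := fun n =>
    hcone _ (by positivity) _ (hTn n u huC)
  have hgnorm : ∀ n, ‖g n‖ ≤ (B*‖u‖/l) * (μ/l)^n := by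
    intro n
    rw [hg]
    simp only [norm_smul, norm_pow, norm_inv, Real.norm_eq_abs, abs_of_pos hl0]
    calc (l⁻¹)^(n+1) * ‖(T^n) u‖ ≤ (l⁻¹)^(n+1) * (‖T^n‖ * ‖u‖) := by
          apply mul_le_mul_of_nonneg_left ((T^n).le_opNorm u) (by positivity)
      _ ≤ (l⁻¹)^(n+1) * ((B * μ^n) * ‖u‖) := by
          apply mul_le_mul_of_nonneg_left
            (mul_le_mul_of_nonneg_right (hgrow n) (norm_nonneg _)) (by positivity)
      _ = (B*‖u‖/l) * (μ/l)^n := by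
          rw [div_pow]
          field_simp
          rw [one_div, inv_pow, pow_succ]; field_simp
  have hgeo : Summable fun n : ℕ => (B*‖u‖/l) * (μ/l)^n := by
    apply Summable.mul_left
    apply summable_geometric_of_lt_one (by positivity)
    rw [div_lt_one hl0]; exact hμl
  have hgsum : Summable g :=
    Summable.of_norm (Summable.of_nonneg_of_le (fun n => norm_nonneg _) hgnorm hgeo)
  set S : E := ∑' n, g n with hSdef
  have hSC : S ∈ C := by
    have htend : Tendsto (fun N => ∑ n ∈ Finset.range N, g n) atTop (𝓝 S) :=
      hgsum.hasSum.tendsto_sum_nat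
    apply hclosed.mem_of_tendsto htend
    filter_upwards with N
    induction N with
    | zero => simpa using h0C
    | succ M ih =>
      rw [Finset.sum_range_succ]
      exact hadd _ ih _ (hgC M)
  -- the auxiliary sequence h
  set h : ℕ → E := fun n => (l⁻¹)^n • ((T^n) u) with hh
  have hhg : ∀ n, h n = l • g n := by
    intro n
    rw [hh, hg]
    simp only [smul_smul]
    congr 1
    rw [pow_succ']
    field_simp
  have hhsum : Summable h := by
    have : Summable fun n => l • g n := hgsum.const_smul l
    simpa [← hhg] using this
  have hTS : T S = ∑' n, h (n+1) := by
    rw [hSdef, T.map_tsum hgsum]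
    congr 1
    funext n
    simp only [hg, hh, map_smul, pow_succ', ContinuousLinearMap.mul_apply]
  have hlS : l • S = ∑' n, h n := by
    rw [hSdef, ← hgsum.tsum_const_smul l]
    congr 1
    funext n
    rw [hhg]
  have hiden : l • S - T S = u := by
    rw [hTS, hlS, hhsum.tsum_eq_zero_add]
    simp only [add_sub_cancel_right]
    rw [hh]
    simp
  refine ⟨S, hSC, hiden, ?_⟩
  intro φ c0 hc0 hlow
  have hφg : ∀ n, c0 * (l⁻¹ * (gelfandR T / l)^n) ≤ φ (g n) := by
    intro n
    rw [hg]
    simp only [map_smul, smul_eq_mul]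
    have h1 : c0 * ‖T^n‖ ≤ φ ((T^n) u) := hlow n
    have h2 : c0 * (gelfandR T)^n ≤ c0 * ‖T^n‖ :=
      mul_le_mul_of_nonneg_left (gelfandR_pow_le T n) hc0
    calc c0 * (l⁻¹ * (gelfandR T / l)^n) = (l⁻¹)^(n+1) * (c0 * (gelfandR T)^n) := by
          simp only [div_eq_mul_inv, mul_pow, pow_succ]
          ring
      _ ≤ (l⁻¹)^(n+1) * φ ((T^n) u) := by
          apply mul_le_mul_of_nonneg_left (le_trans h2 h1) (by positivity)
  have hφsum : Summable fun n => φ (g n) := by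
    have := φ.map_tsum hgsum
    exact (hgsum.map (φ : E →ₗ[ℝ] ℝ) φ.continuous)
  have hlgeo : Summable fun n : ℕ => c0 * (l⁻¹ * (gelfandR T / l)^n) := by
    apply Summable.mul_left
    apply Summable.mul_left
    apply summable_geometric_of_lt_one (by positivity)
    rw [div_lt_one hl0]; exact hl
  have hφS : φ S = ∑' n, φ (g n) := φ.map_tsum hgsum
  rw [hφS]
  have := Summable.tsum_le_tsum hφg hlgeo hφsum
  refine le_trans (le_of_eq ?_) this
  rw [tsum_mul_left, tsum_mul_left, tsum_geometric_of_lt_one (by positivity)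
    (by rw [div_lt_one hl0]; exact hl)]
  have hlr : l - gelfandR T ≠ 0 := ne_of_gt (by linarith)
  field_simp

lemma pow_norm_bound (T : E →L[ℝ] E) (C : Set E)
    (hcone : ∀ r : ℝ, 0 ≤ r → ∀ x ∈ C, r • x ∈ C)
    (hTn : ∀ n : ℕ, ∀ x ∈ C, (T^n) x ∈ C)
    (φ : E →L[ℝ] ℝ) (c : ℝ) (hc : 0 < c) (hφ : ∀ x ∈ C, c * ‖x‖ ≤ φ x)
    (u : E) (ε : ℝ) (hε : 0 < ε) (hball : Metric.closedBall u ε ⊆ C) :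
    ∃ c0 : ℝ, 0 < c0 ∧ ∀ n : ℕ, c0 * ‖T^n‖ ≤ φ ((T^n) u) := by
  have huC : u ∈ C := hball (Metric.mem_closedBall_self hε.le)
  have hφpos : ∀ x ∈ C, 0 ≤ φ x := fun x hx =>
    le_trans (by positivity) (hφ x hx)
  -- upper bound on the cone
  have hupper : ∀ x ∈ C, ∀ n : ℕ, φ ((T^n) x) ≤ (‖x‖/ε) * φ ((T^n) u) := by
    intro x hx n
    rcases eq_or_ne x 0 with rfl | hx0
    · simp
    · have hnx : 0 < ‖x‖ := norm_pos_iff.mpr hx0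
      have hw : u - (ε/‖x‖) • x ∈ Metric.closedBall u ε := by
        simp only [Metric.mem_closedBall, dist_eq_norm]
        rw [sub_sub_cancel_left, norm_neg, norm_smul, Real.norm_eq_abs,
          abs_of_pos (by positivity), div_mul_cancel₀ _ (ne_of_gt hnx)]
      have hz : (‖x‖/ε) • (u - (ε/‖x‖) • x) ∈ C := hcone _ (by positivity) _ (hball hw)
      have hz' : (‖x‖/ε) • u - x ∈ C := by
        rw [smul_sub, smul_smul] at hz
        have : (‖x‖/ε) * (ε/‖x‖) = 1 := by field_simp
        rwa [this, one_smul] at hz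
      have h1 : 0 ≤ φ ((T^n) ((‖x‖/ε) • u - x)) := hφpos _ (hTn n _ hz')
      rw [map_sub, map_smul, map_sub, map_smul, smul_eq_mul] at h1
      linarith
  set A : ℝ := ((‖u‖+ε) * ‖φ‖) / (ε * c) with hA
  set K1 : ℝ := ε⁻¹ * (A + 1) with hK1
  have hApos : 0 ≤ A := by positivity
  have hK1pos : 0 < K1 := by positivity
  have hbound : ∀ n : ℕ, ‖T^n‖ ≤ K1 * ‖(T^n) u‖ := by
    intro n
    apply ContinuousLinearMap.opNorm_le_bound _ (by positivity)
    intro y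
    rcases eq_or_ne y 0 with rfl | hy0
    · simp
    · have hny : 0 < ‖y‖ := norm_pos_iff.mpr hy0
      set y0 : E := ‖y‖⁻¹ • y with hy0def
      have hy0n : ‖y0‖ = 1 := by
        rw [hy0def, norm_smul, Real.norm_eq_abs, abs_of_pos (by positivity),
          inv_mul_cancel₀ (ne_of_gt hny)]
      set x : E := u + ε • y0 with hx
      have hxC : x ∈ C := by
        apply hball
        simp only [hx, Metric.mem_closedBall, dist_eq_norm, add_sub_cancel_left, norm_smul,
          Real.norm_eq_abs, abs_of_pos hε, hy0n, mul_one, le_refl]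
      have hxn : ‖x‖ ≤ ‖u‖ + ε := by
        calc ‖x‖ ≤ ‖u‖ + ‖ε • y0‖ := norm_add_le _ _
          _ = ‖u‖ + ε := by
              rw [norm_smul, Real.norm_eq_abs, abs_of_pos hε, hy0n, mul_one]
      have hTx : ‖(T^n) x‖ ≤ A * ‖(T^n) u‖ := by
        have h1 : c * ‖(T^n) x‖ ≤ φ ((T^n) x) := hφ _ (hTn n _ hxC)
        have h2 : φ ((T^n) x) ≤ (‖x‖/ε) * φ ((T^n) u) := hupper _ hxC n
        have h3 : φ ((T^n) u) ≤ ‖φ‖ * ‖(T^n) u‖ :=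
          (le_abs_self _).trans (by simpa [Real.norm_eq_abs] using φ.le_opNorm ((T^n) u))
        have h3' : 0 ≤ φ ((T^n) u) := hφpos _ (hTn n u huC)
        have h4 : (‖x‖/ε) * φ ((T^n) u) ≤ ((‖u‖+ε)/ε) * (‖φ‖ * ‖(T^n) u‖) :=
          mul_le_mul (by gcongr) h3 h3' (by positivity)
        have h5 : c * ‖(T^n) x‖ ≤ ((‖u‖+ε)/ε) * (‖φ‖ * ‖(T^n) u‖) := by linarith
        have h6 : A * ‖(T^n) u‖ = ((‖u‖+ε)/ε) * (‖φ‖ * ‖(T^n) u‖) / c := by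
          rw [hA]; field_simp
        rw [h6, le_div_iff₀ hc, mul_comm]
        exact h5
      have hTy0 : ‖(T^n) y0‖ ≤ K1 * ‖(T^n) u‖ := by
        have hdecomp : (T^n) y0 = ε⁻¹ • ((T^n) x - (T^n) u) := by
          simp [hx, map_add, map_smul, smul_smul, inv_mul_cancel₀ (ne_of_gt hε)]
        rw [hdecomp, norm_smul, Real.norm_eq_abs, abs_of_pos (by positivity : (0:ℝ) < ε⁻¹)]
        calc ε⁻¹ * ‖(T^n) x - (T^n) u‖
            ≤ ε⁻¹ * (‖(T^n) x‖ + ‖(T^n) u‖) := by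
              apply mul_le_mul_of_nonneg_left (norm_sub_le _ _) (by positivity)
          _ ≤ ε⁻¹ * (A * ‖(T^n) u‖ + ‖(T^n) u‖) := by
              apply mul_le_mul_of_nonneg_left (by linarith) (by positivity)
          _ = K1 * ‖(T^n) u‖ := by rw [hK1]; ring
      calc ‖(T^n) y‖ = ‖y‖ * ‖(T^n) y0‖ := by
            rw [hy0def, map_smul, norm_smul, Real.norm_eq_abs, abs_of_pos (by positivity)]
            field_simp
          _ ≤ ‖y‖ * (K1 * ‖(T^n) u‖) :=
            mul_le_mul_of_nonneg_left hTy0 (norm_nonneg _)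
          _ = K1 * ‖(T^n) u‖ * ‖y‖ := by ring
  refine ⟨c / K1, by positivity, fun n => ?_⟩
  calc c / K1 * ‖T^n‖ ≤ c / K1 * (K1 * ‖(T^n) u‖) :=
        mul_le_mul_of_nonneg_left (hbound n) (by positivity)
    _ = c * ‖(T^n) u‖ := by field_simp
    _ ≤ φ ((T^n) u) := hφ _ (hTn n u huC)

end PFaux

/-!
Statement 2 (Perron–Frobenius / Birkhoff). Let `C` be a closed convex cone in a
finite-dimensional real vector space which spans the space and contains no line,
and let `T` be a linear map with `T(C) ⊆ C`.  Then the spectral radius of `T` is an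
eigenvalue of `T` with an eigenvector in `C`.
-/

theorem perron_frobenius_cone
    (E : Type*) [NormedAddCommGroup E] [NormedSpace ℝ E]
    [FiniteDimensional ℝ E] [Nontrivial E]
    (T : E →L[ℝ] E) (C : Set E)
    (hclosed : IsClosed C) (hconv : Convex ℝ C)
    (hcone : ∀ r : ℝ, 0 ≤ r → ∀ x ∈ C, r • x ∈ C)
    (hspan : Submodule.span ℝ C = ⊤)
    (hsalient : C ∩ (-C) ⊆ {0})
    (hT : ∀ x ∈ C, T x ∈ C) :
    ∃ v ∈ C, v ≠ 0 ∧ T v = (spectralRadius ℝ T).toReal • v := by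
  -- basic cone facts
  have hCne : C.Nonempty := by
    by_contra h
    rw [Set.not_nonempty_iff_eq_empty] at h
    rw [h, Submodule.span_empty] at hspan
    exact absurd hspan bot_ne_top
  obtain ⟨x₀, hx₀⟩ := hCne
  have h0C : (0:E) ∈ C := by simpa using hcone 0 le_rfl x₀ hx₀
  obtain ⟨φ, c, hc, hφ⟩ := exists_pos_functional E C hclosed hconv hcone h0C hsalient
  obtain ⟨u, ε, hε, hu0, hball⟩ := exists_interior_point E C hconv h0C hspan hsalient
  have huC : u ∈ C := hball (Metric.mem_closedBall_self hε.le)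
  have hTn : ∀ n : ℕ, ∀ x ∈ C, (T^n) x ∈ C := by
    intro n
    induction n with
    | zero => intro x hx; simpa using hx
    | succ m ih =>
      intro x hx
      rw [pow_succ', ContinuousLinearMap.mul_apply]
      exact hT _ (ih x hx)
  obtain ⟨c0, hc0, hlow⟩ := pow_norm_bound T C hcone hTn φ c hc hφ u ε hε hball
  set r : ℝ := gelfandR T with hrdef
  have hr0 : 0 ≤ r := gelfandR_nonneg T
  -- the approximating sequence
  have hkey : ∀ k : ℕ, ∃ S ∈ C, (r + ((k:ℝ)+1)⁻¹) • S - T S = u ∧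
      c0 * ((k:ℝ)+1) ≤ φ S := by
    intro k
    have hk1 : (0:ℝ) < (k:ℝ)+1 := by positivity
    have hlk : r < r + ((k:ℝ)+1)⁻¹ := by
      have : (0:ℝ) < ((k:ℝ)+1)⁻¹ := by positivity
      linarith
    obtain ⟨S, hSC, hid, hlb⟩ := resolvent_series T C hclosed hconv hcone h0C hT u huC
      (r + ((k:ℝ)+1)⁻¹) hlk
    refine ⟨S, hSC, hid, ?_⟩
    have := hlb φ c0 hc0.le hlow
    rwa [add_sub_cancel_left, inv_inv] at this
  choose S hSC hSid hSlow using hkey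
  -- positivity of φ's norm
  have hφu : 0 < φ u := lt_of_lt_of_le (mul_pos hc (norm_pos_iff.mpr hu0)) (hφ u huC)
  have hφn : 0 < ‖φ‖ := by
    rcases le_or_gt ‖φ‖ 0 with h | h
    · exfalso
      have h1 : φ u ≤ ‖φ‖ * ‖u‖ :=
        (le_abs_self _).trans (by simpa [Real.norm_eq_abs] using φ.le_opNorm u)
      nlinarith [norm_nonneg u]
    · exact h
  have hSpos : ∀ k : ℕ, 0 < ‖S k‖ := by
    intro k
    rcases le_or_gt ‖S k‖ 0 with h | h
    · exfalso
      have h1 : φ (S k) ≤ ‖φ‖ * ‖S k‖ :=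
        (le_abs_self _).trans (by simpa [Real.norm_eq_abs] using φ.le_opNorm (S k))
      have h2 := hSlow k
      have h3 : (0:ℝ) < c0 * ((k:ℝ)+1) := by positivity
      nlinarith
    · exact h
  have hSinv : ∀ k : ℕ, ‖S k‖⁻¹ ≤ ‖φ‖ / (c0 * ((k:ℝ)+1)) := by
    intro k
    have h1 : φ (S k) ≤ ‖φ‖ * ‖S k‖ :=
      (le_abs_self _).trans (by simpa [Real.norm_eq_abs] using φ.le_opNorm (S k))
    have h2 := hSlow k
    have h3 : (0:ℝ) < c0 * ((k:ℝ)+1) := by positivity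
    rw [inv_le_iff_one_le_mul₀ (hSpos k), div_mul_eq_mul_div, le_div_iff₀ h3, one_mul]
    nlinarith
  -- normalized vectors
  set v : ℕ → E := fun k => ‖S k‖⁻¹ • S k with hv
  have hvmem : ∀ k, v k ∈ C ∩ Metric.sphere 0 1 := by
    intro k
    refine ⟨hcone _ (by positivity) _ (hSC k), ?_⟩
    simp only [mem_sphere_iff_norm, sub_zero, hv, norm_smul, Real.norm_eq_abs,
      abs_of_pos (inv_pos.2 (hSpos k))]
    rw [inv_mul_cancel₀ (ne_of_gt (hSpos k))]
  have hvid : ∀ k, T (v k) = (r + ((k:ℝ)+1)⁻¹) • v k - ‖S k‖⁻¹ • u := by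
    intro k
    have h2 : T (S k) = (r + ((k:ℝ)+1)⁻¹) • S k - u := by
      rw [← hSid k]; abel
    simp only [hv, map_smul, h2, smul_sub]
    module
  -- compactness
  have hcomp : IsCompact (C ∩ Metric.sphere 0 1) :=
    (isCompact_sphere (0:E) 1).inter_left hclosed
  obtain ⟨w, hwmem, ψ, hψmono, hψtend⟩ := hcomp.tendsto_subseq hvmem
  have hψtop : Tendsto ψ atTop atTop := hψmono.tendsto_atTop
  -- limits
  have hlim1 : Tendsto (fun k => T (v (ψ k))) atTop (𝓝 (T w)) :=
    (T.continuous.tendsto w).comp hψtend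
  have hδ : Tendsto (fun k => ((ψ k : ℝ)+1)⁻¹) atTop (𝓝 0) := by
    have h1 : Tendsto (fun n : ℕ => ((n:ℝ)+1)⁻¹) atTop (𝓝 0) := by
      simpa only [one_div] using
        (tendsto_one_div_add_atTop_nhds_zero_nat : Tendsto (fun n : ℕ => 1 / ((n:ℝ) + 1)) atTop (𝓝 0))
    exact h1.comp hψtop
  have hscal : Tendsto (fun k => r + ((ψ k:ℝ)+1)⁻¹) atTop (𝓝 r) := by
    have h2 := (tendsto_const_nhds (α := ℕ) (f := atTop) (x := r)).add hδ
    simpa using h2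
  have hSinv0 : Tendsto (fun k => ‖S (ψ k)‖⁻¹) atTop (𝓝 0) := by
    apply squeeze_zero (fun k => (inv_pos.2 (hSpos (ψ k))).le)
      (fun k => hSinv (ψ k))
    have h1 : Tendsto (fun n : ℕ => ‖φ‖ / (c0 * ((n:ℝ)+1))) atTop (𝓝 0) := by
      apply Tendsto.div_atTop tendsto_const_nhds
      apply Tendsto.const_mul_atTop hc0
      exact tendsto_atTop_add_const_right _ _ tendsto_natCast_atTop_atTop
    exact h1.comp hψtop
  have hlim2 : Tendsto (fun k => (r + ((ψ k:ℝ)+1)⁻¹) • v (ψ k) - ‖S (ψ k)‖⁻¹ • u)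
      atTop (𝓝 (r • w - (0:ℝ) • u)) :=
    (hscal.smul hψtend).sub (hSinv0.smul_const u)
  have hTw : T w = r • w := by
    have : Tendsto (fun k => T (v (ψ k))) atTop (𝓝 (r • w - (0:ℝ) • u)) := by
      have : (fun k => T (v (ψ k))) =
          fun k => (r + ((ψ k:ℝ)+1)⁻¹) • v (ψ k) - ‖S (ψ k)‖⁻¹ • u := by
        funext k; exact hvid (ψ k)
      rw [this]
      exact hlim2
    have h0 : r • w - (0:ℝ) • u = r • w := by simp
    rw [h0] at this
    exact tendsto_nhds_unique hlim1 this
  have hw0 : w ≠ 0 := by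
    intro h
    have := hwmem.2
    rw [h] at this
    simp at this
  -- identify r with the spectral radius
  have hmem : r ∈ spectrum ℝ T := mem_spectrum_of_eigen T r w hw0 hTw
  have h1 : r ≤ (spectralRadius ℝ T).toReal := le_toReal_spectralRadius T r hr0 hmem
  have h2 : (spectralRadius ℝ T).toReal ≤ r := toReal_spectralRadius_le_gelfandR T
  have heq : (spectralRadius ℝ T).toReal = r := le_antisymm h2 h1
  exact ⟨w, hwmem.1, hw0, by rw [heq, hTw]⟩
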